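/- Let p be a prime and let A be a commutative ring with an element ϖ ∈ A such that ϖ divides p and A is ϖ-adically complete. Then the componentwise reduction map from the set of p-power-compatible sequences in A to the set of p-power-compatible sequences in A/pA, sending (f_n)_{n∈ℕ} with f_{n+1}^p = f_n for all n to (f_n mod p)_{n∈ℕ}, is a bijection; moreover this bijection is multiplicative (it sends the termwise product of two sequences to the termwise product of their images) and sends the constant sequence 1 to the constant sequence 1. -/

import Mathlib

section Aux
variable {A : Type} [CommRing A]

lemma key_pow {p : ℕ} (hp : p.Prime) (b c : A) :
    ∃ r s : A, (b + c) ^ p = b ^ p + (p : A) * (c * r) + c ^ 2 * s := by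
  have h := add_pow_prime_eq hp c b
  have hdvd : c ∣ c * b * ∑ k ∈ Finset.Ioo 0 p, c ^ (k - 1) * b ^ (p - k - 1) * ((p.choose k / p : ℕ) : A) := by
    exact dvd_mul_of_dvd_left (dvd_mul_right c b) _
  obtain ⟨r, hr⟩ := hdvd
  refine ⟨r, c ^ (p - 2), ?_⟩
  have h2 := hp.two_le
  have hc : c ^ 2 * c ^ (p - 2) = c ^ p := by
    rw [← pow_add]
    congr 1
    omega
  rw [add_comm b c, h, ← hc]
  linear_combination (p : A) * hr

lemma L1 {p : ℕ} (hp : p.Prime) {ϖ : A} (hd : ϖ ∣ (p : A)) {a b : A} {k : ℕ}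
    (hk : 1 ≤ k) (h : ϖ ^ k ∣ a - b) : ϖ ^ (k + 1) ∣ a ^ p - b ^ p := by
  obtain ⟨t, ht⟩ := h
  have ha : a = b + ϖ ^ k * t := by linear_combination ht
  obtain ⟨r, s, hrs⟩ := key_pow hp b (ϖ ^ k * t)
  obtain ⟨u, hu⟩ := hd
  obtain ⟨w, hw⟩ : ϖ ^ (k + 1) ∣ (ϖ ^ k) ^ 2 := by
    rw [← pow_mul]; exact pow_dvd_pow ϖ (by omega)
  refine ⟨u * (t * r) + w * (t ^ 2 * s), ?_⟩
  rw [ha, hrs]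
  linear_combination hu * (ϖ ^ k * t * r) + hw * (t ^ 2 * s)

lemma L2 {p : ℕ} (hp : p.Prime) {ϖ : A} (hd : ϖ ∣ (p : A)) {a b : A} {k : ℕ}
    (h : (p : A) * ϖ ^ k ∣ a - b) : (p : A) * ϖ ^ (k + 1) ∣ a ^ p - b ^ p := by
  obtain ⟨t, ht⟩ := h
  have ha : a = b + (p : A) * ϖ ^ k * t := by linear_combination ht
  obtain ⟨r, s, hrs⟩ := key_pow hp b ((p : A) * ϖ ^ k * t)
  obtain ⟨u, hu⟩ := hd
  refine ⟨u * (t * r) + u * ϖ ^ k * (t ^ 2 * s), ?_⟩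
  rw [ha, hrs]
  linear_combination ((p:A) * ϖ ^ k * t * r + (p:A) * ϖ ^ (2*k) * t ^ 2 * s) * hu

lemma L2m {p : ℕ} (hp : p.Prime) {ϖ : A} (hd : ϖ ∣ (p : A)) {a b : A}
    (h : (p : A) ∣ a - b) (m : ℕ) : (p : A) * ϖ ^ m ∣ a ^ p ^ m - b ^ p ^ m := by
  induction m with
  | zero => simpa using h
  | succ m ih =>
      have h2 := L2 hp hd ih
      rwa [← pow_mul, ← pow_mul, ← pow_succ] at h2

lemma smod_iff {ϖ : A} (n : ℕ) (x y : A) :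
    x ≡ y [SMOD ((Ideal.span {ϖ}) ^ n • ⊤ : Submodule A A)] ↔ ϖ ^ n ∣ x - y := by
  rw [SModEq.sub_mem, smul_eq_mul, Ideal.mul_top, Ideal.span_singleton_pow,
    Ideal.mem_span_singleton]

end Aux

/-- The set of `p`-power-compatible sequences in a commutative ring `R`. -/
def PPowCompatible (p : ℕ) (R : Type) [CommRing R] : Type :=
  { f : ℕ → R // ∀ n : ℕ, f (n + 1) ^ p = f n }

/-- Componentwise reduction of `p`-power-compatible sequences modulo `p`. -/
def reduceModP (p : ℕ) (A : Type) [CommRing A] :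
    PPowCompatible p A → PPowCompatible p (A ⧸ Ideal.span {(p : A)}) :=
  fun f => ⟨fun n => Ideal.Quotient.mk (Ideal.span {(p : A)}) (f.1 n),
    fun n => by rw [← map_pow, f.2]⟩

theorem p_power_compatible_sequences_lift
    (p : ℕ) (hp : p.Prime) (A : Type) [CommRing A] (ϖ : A)
    (hdvd : ϖ ∣ (p : A)) (hcomplete : IsAdicComplete (Ideal.span {ϖ}) A) :
    Function.Bijective (reduceModP p A) ∧
    (∀ f g : PPowCompatible p A,
      reduceModP p A ⟨fun n => f.1 n * g.1 n, fun n => by rw [mul_pow, f.2, g.2]⟩ =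
        ⟨fun n => (reduceModP p A f).1 n * (reduceModP p A g).1 n,
          fun n => by rw [mul_pow, (reduceModP p A f).2, (reduceModP p A g).2]⟩) ∧
    reduceModP p A ⟨fun _ => 1, fun _ => one_pow p⟩ =
      ⟨fun _ => 1, fun _ => one_pow p⟩ := by
  refine ⟨⟨?_, ?_⟩, fun f g => Subtype.ext (funext fun n => map_mul _ _ _),
    Subtype.ext (funext fun n => map_one _)⟩
  · -- injective
    intro f g h
    have hpc : ∀ n, (p : A) ∣ f.1 n - g.1 n := by
      intro n
      have h1 : Ideal.Quotient.mk (Ideal.span {(p:A)}) (f.1 n)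
          = Ideal.Quotient.mk (Ideal.span {(p:A)}) (g.1 n) :=
        congrFun (congrArg Subtype.val h) n
      rwa [Ideal.Quotient.eq, Ideal.mem_span_singleton] at h1
    have key : ∀ m n, ϖ ^ (m + 1) ∣ f.1 n - g.1 n := by
      intro m
      induction m with
      | zero => intro n; simpa using hdvd.trans (hpc n)
      | succ m ih =>
          intro n
          have h2 := L1 hp hdvd (Nat.succ_le_succ (Nat.zero_le m)) (ih (n + 1))
          rwa [f.2, g.2] at h2
    apply Subtype.ext; funext n
    rw [← sub_eq_zero]
    refine hcomplete.toIsHausdorff.haus _ fun k => ?_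
    refine (smod_iff k _ 0).mpr ?_
    rw [sub_zero]
    match k with
    | 0 => simpa using dvd_refl _
    | (m+1) => exact key m n
  · -- surjective
    intro G
    choose g hg using fun n => Ideal.Quotient.mk_surjective (I := Ideal.span {(p:A)}) (G.1 n)
    have hpd : ∀ n, (p : A) ∣ g (n + 1) ^ p - g n := by
      intro n
      rw [← Ideal.mem_span_singleton, ← Ideal.Quotient.eq_zero_iff_mem, map_sub, map_pow,
        hg, hg, G.2, sub_self]
    have hC1 : ∀ n m, (p : A) * ϖ ^ m ∣ g (n + (m+1)) ^ p ^ (m+1) - g (n + m) ^ p ^ m := by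
      intro n m
      have h0 := L2m hp hdvd (hpd (n + m)) m
      rw [← pow_mul, ← pow_succ'] at h0
      have hidx : n + m + 1 = n + (m + 1) := by omega
      rwa [hidx] at h0
    choose d hd2 using hC1
    have haS : ∀ n M, g (n + M) ^ p ^ M
        = g n + (p : A) * ∑ m ∈ Finset.range M, ϖ ^ m * d n m := by
      intro n M
      induction M with
      | zero => simp
      | succ M ihM =>
          have h3 := hd2 n M
          rw [Finset.sum_range_succ]
          linear_combination h3 + ihM
    have hpre : ∀ n, ∃ L, ∀ M, (∑ m ∈ Finset.range M, ϖ ^ m * d n m)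
        ≡ L [SMOD ((Ideal.span {ϖ}) ^ M • ⊤ : Submodule A A)] := by
      intro n
      refine hcomplete.toIsPrecomplete.prec fun {m M} hmM => (smod_iff m _ _).mpr ?_
      rw [dvd_sub_comm, ← Finset.sum_Ico_eq_sub _ hmM]
      refine Finset.dvd_sum fun j hj => ?_
      exact (pow_dvd_pow ϖ (Finset.mem_Ico.mp hj).1).mul_right _
    choose s hs using hpre
    have hfa : ∀ n M, ϖ ^ (M + 1) ∣ (g n + (p:A) * s n) - g (n + M) ^ p ^ M := by
      intro n M
      have h1 : ϖ ^ M ∣ (∑ m ∈ Finset.range M, ϖ ^ m * d n m) - s n :=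
        (smod_iff M _ _).mp (hs n M)
      have h2 : ϖ ^ (M + 1) ∣ (p : A) * ((∑ m ∈ Finset.range M, ϖ ^ m * d n m) - s n) := by
        rw [pow_succ']
        exact mul_dvd_mul hdvd h1
      have h4 : (g n + (p:A) * s n) - g (n + M) ^ p ^ M
          = -((p : A) * ((∑ m ∈ Finset.range M, ϖ ^ m * d n m) - s n)) := by
        linear_combination - haS n M
      rw [h4]
      exact dvd_neg.mpr h2
    have hcomp : ∀ n, (g (n+1) + (p:A) * s (n+1)) ^ p = g n + (p:A) * s n := by
      intro n
      rw [← sub_eq_zero]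
      refine hcomplete.toIsHausdorff.haus _ fun k => ?_
      refine (smod_iff k _ 0).mpr ?_
      rw [sub_zero]
      match k with
      | 0 => simpa using dvd_refl _
      | (m+1) =>
        have h5 : ϖ ^ (m+1) ∣ (g (n+1) + (p:A) * s (n+1)) ^ p - (g (n+1+m) ^ p ^ m) ^ p :=
          dvd_trans (hfa (n+1) m) (sub_dvd_pow_sub_pow _ _ p)
        have h6 : (g (n+1+m) ^ p ^ m) ^ p = g (n + (m+1)) ^ p ^ (m+1) := by
          have hidx : n + 1 + m = n + (m + 1) := by omega
          rw [hidx, ← pow_mul, ← pow_succ]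
        have h7 : ϖ ^ (m+1) ∣ g (n + (m+1)) ^ p ^ (m+1) - (g n + (p:A) * s n) := by
          have := hfa n (m+1)
          have h8 := dvd_neg.mpr (dvd_trans (pow_dvd_pow ϖ (by omega : m+1 ≤ m+2)) this)
          rwa [neg_sub] at h8
        have h9 := dvd_add (h6 ▸ h5) h7
        rwa [sub_add_sub_cancel] at h9
    refine ⟨⟨fun n => g n + (p:A) * s n, hcomp⟩, Subtype.ext (funext fun n => ?_)⟩
    show Ideal.Quotient.mk _ (g n + (p:A) * s n) = G.1 n
    rw [map_add, map_mul, Ideal.Quotient.eq_zero_iff_mem.mpr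
      (Ideal.mem_span_singleton_self ((p:A))), zero_mul, add_zero, hg]
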